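/- There exists a constant C > 0 depending only on K₀, σ_L, σ_U such that for all measurable functions b, b₀ : [0,1] → ℝ with |b(x)| ≤ K₀ and |b₀(x)| ≤ K₀ for all x ∈ [0,1], one has |H_b − H_{b₀}| ≤ C ‖b − b₀‖₂. -/

import Mathlib

open MeasureTheory Real

/-- `I_b(x) = ∫₀ˣ 2 b(y) / σ(y)² dy`. -/
noncomputable def Ib (σ b : ℝ → ℝ) (x : ℝ) : ℝ :=
  ∫ y in (0:ℝ)..x, 2 * b y / (σ y) ^ 2

/-- The normalising constant `H_b`. -/
noncomputable def Hb (σ b : ℝ → ℝ) : ℝ :=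
  ∫ x in (0:ℝ)..1, (Real.exp (Ib σ b x) / (σ x) ^ 2) *
    (Real.exp (Ib σ b 1) * (∫ y in x..(1:ℝ), Real.exp (-(Ib σ b y))) +
      ∫ y in (0:ℝ)..x, Real.exp (-(Ib σ b y)))

/-- The `L²([0,1])`-norm of a function. -/
noncomputable def L2norm (f : ℝ → ℝ) : ℝ :=
  Real.sqrt (∫ x in (0:ℝ)..1, f x ^ 2)

lemma exp_lip {u v M : ℝ} (hu : |u| ≤ M) (hv : |v| ≤ M) :
    |Real.exp u - Real.exp v| ≤ Real.exp M * |u - v| := by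
  wlog h : v ≤ u generalizing u v
  · rw [abs_sub_comm, abs_sub_comm u v]; exact this hv hu (le_of_not_ge h)
  have he : Real.exp v = Real.exp u * Real.exp (v - u) := by
    rw [← Real.exp_add]; ring_nf
  have h1 := Real.add_one_le_exp (v - u)
  have h2 : Real.exp u ≤ Real.exp M := Real.exp_le_exp.mpr (abs_le.mp hu).2
  have h3 := Real.exp_pos u
  rw [abs_of_nonneg (by have := Real.exp_le_exp.mpr h; linarith), abs_of_nonneg (by linarith)]
  nlinarith


lemma ii_of_bdd {f : ℝ → ℝ} {C : ℝ} (hf : Measurable f)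
    (hC : ∀ x ∈ Set.Icc (0:ℝ) 1, |f x| ≤ C) {u v : ℝ}
    (hu : u ∈ Set.Icc (0:ℝ) 1) (hv : v ∈ Set.Icc (0:ℝ) 1) :
    IntervalIntegrable f volume u v := by
  have hsub : Set.uIoc u v ⊆ Set.Icc (0:ℝ) 1 := fun x hx =>
    ⟨(le_min hu.1 hv.1).trans hx.1.le, hx.2.trans (max_le hu.2 hv.2)⟩
  rw [intervalIntegrable_iff]
  refine Integrable.mono' (g := fun _ => C) ?_ hf.aestronglyMeasurable ?_
  · exact integrableOn_const measure_Ioc_lt_top.ne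
  · filter_upwards [ae_restrict_mem measurableSet_uIoc] with x hx
    simpa using hC x (hsub hx)

lemma l1_le_l2 {g : ℝ → ℝ} {C : ℝ} (hg : Measurable g)
    (hC : ∀ x ∈ Set.Icc (0:ℝ) 1, |g x| ≤ C) :
    (∫ x in (0:ℝ)..1, |g x|) ≤ Real.sqrt (∫ x in (0:ℝ)..1, g x ^ 2) := by
  set S := ∫ x in (0:ℝ)..1, g x ^ 2 with hS
  have hC0 : 0 ≤ C := le_trans (abs_nonneg _) (hC 0 (by norm_num))
  have hS0 : 0 ≤ S := intervalIntegral.integral_nonneg zero_le_one (fun u _ => sq_nonneg _)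
  have hint_abs : IntervalIntegrable (fun x => |g x|) volume 0 1 :=
    ii_of_bdd hg.abs (fun x hx => by simpa [abs_abs] using hC x hx) (by norm_num) (by norm_num)
  have hint_sq : IntervalIntegrable (fun x => g x ^ 2) volume 0 1 :=
    ii_of_bdd (C := C^2) (hg.pow_const 2) (fun x hx => by
      rw [abs_pow, sq_abs]
      nlinarith [hC x hx, abs_nonneg (g x), sq_abs (g x)]) (by norm_num) (by norm_num)
  have key : ∀ t : ℝ, 0 < t → (∫ x in (0:ℝ)..1, |g x|) ≤ S / (2 * t) + t / 2 := by
    intro t ht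
    have hint_rhs : IntervalIntegrable (fun x => g x ^ 2 / (2 * t) + t / 2) volume 0 1 := by
      apply IntervalIntegrable.add _ (intervalIntegrable_const)
      exact hint_sq.div_const _
    have hmono : (∫ x in (0:ℝ)..1, |g x|) ≤ ∫ x in (0:ℝ)..1, (g x ^ 2 / (2 * t) + t / 2) := by
      apply intervalIntegral.integral_mono_on zero_le_one hint_abs hint_rhs
      intro x _
      rw [div_add_div _ _ (by positivity) (by norm_num), le_div_iff₀ (by positivity)]
      nlinarith [sq_nonneg (|g x| - t), sq_abs (g x)]
    calc (∫ x in (0:ℝ)..1, |g x|) ≤ ∫ x in (0:ℝ)..1, (g x ^ 2 / (2 * t) + t / 2) := hmono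
      _ = S / (2 * t) + t / 2 := by
          rw [intervalIntegral.integral_add (hint_sq.div_const _) intervalIntegrable_const,
            intervalIntegral.integral_div, intervalIntegral.integral_const]
          simp
          rfl
  rcases eq_or_lt_of_le hS0 with h0 | hpos
  · have : ∀ ε : ℝ, 0 < ε → (∫ x in (0:ℝ)..1, |g x|) ≤ Real.sqrt S + ε := by
      intro ε hε
      have := key ε hε
      rw [← h0] at this
      simp only [zero_div] at this
      have hsq : Real.sqrt S = 0 := by rw [← h0, Real.sqrt_zero]
      linarith
    exact le_of_forall_pos_le_add this
  · have hst : 0 < Real.sqrt S := Real.sqrt_pos.mpr hpos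
    have := key (Real.sqrt S) hst
    have hss : Real.sqrt S * Real.sqrt S = S := Real.mul_self_sqrt hS0
    have : S / (2 * Real.sqrt S) + Real.sqrt S / 2 = Real.sqrt S := by
      field_simp
      nlinarith
    linarith [key (Real.sqrt S) hst]


section aux
variable {σ b b₀ : ℝ → ℝ} {K₀ σL : ℝ}

lemma frac_bdd (hσL : 0 < σL) (hσl : ∀ x ∈ Set.Icc (0:ℝ) 1, σL ≤ σ x)
    (hbK : ∀ x ∈ Set.Icc (0:ℝ) 1, |b x| ≤ K₀) :
    ∀ y ∈ Set.Icc (0:ℝ) 1, |2 * b y / σ y ^ 2| ≤ 2 * K₀ / σL ^ 2 := by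
  have hK0 : 0 ≤ K₀ := le_trans (abs_nonneg _) (hbK 0 (by norm_num))
  intro y hy
  have h1 : σL ≤ σ y := hσl y hy
  have h2 : σL ^ 2 ≤ σ y ^ 2 := by nlinarith
  have h3 : |σ y ^ 2| = σ y ^ 2 := abs_of_nonneg (by positivity)
  rw [abs_div, h3, abs_mul, abs_two]
  exact div_le_div₀ (by positivity) (by nlinarith [hbK y hy]) (by positivity) h2

lemma Ib_bdd (hσL : 0 < σL) (hσl : ∀ x ∈ Set.Icc (0:ℝ) 1, σL ≤ σ x)
    (hbK : ∀ x ∈ Set.Icc (0:ℝ) 1, |b x| ≤ K₀) :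
    ∀ x ∈ Set.Icc (0:ℝ) 1, |Ib σ b x| ≤ 2 * K₀ / σL ^ 2 := by
  intro x hx
  have hK0 : 0 ≤ K₀ := le_trans (abs_nonneg _) (hbK 0 (by norm_num))
  have hsub : Set.uIoc (0:ℝ) x ⊆ Set.Icc (0:ℝ) 1 := fun y hy =>
    ⟨(le_min le_rfl hx.1).trans hy.1.le, hy.2.trans (max_le zero_le_one hx.2)⟩
  calc |Ib σ b x| = ‖∫ y in (0:ℝ)..x, 2 * b y / σ y ^ 2‖ := by rw [Real.norm_eq_abs]; rfl
    _ ≤ 2 * K₀ / σL ^ 2 * |x - 0| := intervalIntegral.norm_integral_le_of_norm_le_const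
        (fun y hy => by rw [Real.norm_eq_abs]; exact frac_bdd hσL hσl hbK y (hsub hy))
    _ ≤ 2 * K₀ / σL ^ 2 * 1 := by
        apply mul_le_mul_of_nonneg_left _ (by positivity)
        rw [sub_zero, abs_of_nonneg hx.1]; exact hx.2
    _ = 2 * K₀ / σL ^ 2 := mul_one _

lemma Ib_diff (hσL : 0 < σL) (hσ : Measurable σ)
    (hσl : ∀ x ∈ Set.Icc (0:ℝ) 1, σL ≤ σ x)
    (hb : Measurable b) (hb₀ : Measurable b₀)
    (hbK : ∀ x ∈ Set.Icc (0:ℝ) 1, |b x| ≤ K₀)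
    (hb₀K : ∀ x ∈ Set.Icc (0:ℝ) 1, |b₀ x| ≤ K₀) :
    ∀ x ∈ Set.Icc (0:ℝ) 1, |Ib σ b x - Ib σ b₀ x| ≤
      2 / σL ^ 2 * ∫ y in (0:ℝ)..1, |b y - b₀ y| := by
  have hK0 : 0 ≤ K₀ := le_trans (abs_nonneg _) (hbK 0 (by norm_num))
  have hmb : Measurable (fun y => 2 * b y / σ y ^ 2) :=
    (measurable_const.mul hb).div (hσ.pow_const 2)
  have hmb₀ : Measurable (fun y => 2 * b₀ y / σ y ^ 2) :=
    (measurable_const.mul hb₀).div (hσ.pow_const 2)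
  have hpt : ∀ y ∈ Set.Icc (0:ℝ) 1,
      |2 * b y / σ y ^ 2 - 2 * b₀ y / σ y ^ 2| ≤ 2 / σL ^ 2 * |b y - b₀ y| := by
    intro y hy
    have h1 : σL ≤ σ y := hσl y hy
    have h2 : σL ^ 2 ≤ σ y ^ 2 := by nlinarith
    have heq : 2 * b y / σ y ^ 2 - 2 * b₀ y / σ y ^ 2 = 2 * (b y - b₀ y) / σ y ^ 2 := by
      ring
    rw [heq, abs_div, abs_mul, abs_two, abs_of_nonneg (sq_nonneg (σ y))]
    calc 2 * |b y - b₀ y| / σ y ^ 2 ≤ 2 * |b y - b₀ y| / σL ^ 2 :=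
          div_le_div₀ (by positivity) le_rfl (by positivity) h2
      _ = 2 / σL ^ 2 * |b y - b₀ y| := by ring
  have hptC : ∀ y ∈ Set.Icc (0:ℝ) 1,
      |2 * b y / σ y ^ 2 - 2 * b₀ y / σ y ^ 2| ≤ 2 / σL ^ 2 * (2 * K₀) := by
    intro y hy
    refine (hpt y hy).trans ?_
    have : |b y - b₀ y| ≤ 2 * K₀ := by
      calc |b y - b₀ y| ≤ |b y| + |b₀ y| := abs_sub _ _
        _ ≤ 2 * K₀ := by linarith [hbK y hy, hb₀K y hy]
    have h2 : (0:ℝ) ≤ 2 / σL ^ 2 := by positivity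
    nlinarith
  intro x hx
  have hx01 : x ∈ Set.Icc (0:ℝ) 1 := hx
  have h01 : (0:ℝ) ∈ Set.Icc (0:ℝ) 1 := by norm_num
  have hii_b : IntervalIntegrable (fun y => 2 * b y / σ y ^ 2) volume 0 x :=
    ii_of_bdd hmb (frac_bdd hσL hσl hbK) h01 hx01
  have hii_b₀ : IntervalIntegrable (fun y => 2 * b₀ y / σ y ^ 2) volume 0 x :=
    ii_of_bdd hmb₀ (frac_bdd hσL hσl hb₀K) h01 hx01
  have habs_meas : Measurable (fun y => |2 * b y / σ y ^ 2 - 2 * b₀ y / σ y ^ 2|) :=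
    (hmb.sub hmb₀).abs
  have hii_abs : IntervalIntegrable
      (fun y => |2 * b y / σ y ^ 2 - 2 * b₀ y / σ y ^ 2|) volume 0 x :=
    ii_of_bdd habs_meas (fun y hy => by simpa [abs_abs] using hptC y hy) h01 hx01
  have hrhs_meas : Measurable (fun y => 2 / σL ^ 2 * |b y - b₀ y|) :=
    measurable_const.mul (hb.sub hb₀).abs
  have hrhs_bdd : ∀ y ∈ Set.Icc (0:ℝ) 1,
      abs (2 / σL ^ 2 * |b y - b₀ y|) ≤ 2 / σL ^ 2 * (2 * K₀) := by
    intro y hy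
    have h2 : (0:ℝ) ≤ 2 / σL ^ 2 := by positivity
    have : |b y - b₀ y| ≤ 2 * K₀ := by
      calc |b y - b₀ y| ≤ |b y| + |b₀ y| := abs_sub _ _
        _ ≤ 2 * K₀ := by linarith [hbK y hy, hb₀K y hy]
    rw [abs_of_nonneg (by positivity)]
    nlinarith
  have hii_rhs_x : IntervalIntegrable (fun y => 2 / σL ^ 2 * |b y - b₀ y|) volume 0 x :=
    ii_of_bdd hrhs_meas hrhs_bdd h01 hx01
  have hii_rhs_1 : IntervalIntegrable (fun y => 2 / σL ^ 2 * |b y - b₀ y|) volume 0 1 :=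
    ii_of_bdd hrhs_meas hrhs_bdd h01 (by norm_num)
  calc |Ib σ b x - Ib σ b₀ x|
      = |∫ y in (0:ℝ)..x, (2 * b y / σ y ^ 2 - 2 * b₀ y / σ y ^ 2)| := by
        rw [Ib, Ib, intervalIntegral.integral_sub hii_b hii_b₀]
    _ ≤ ∫ y in (0:ℝ)..x, |2 * b y / σ y ^ 2 - 2 * b₀ y / σ y ^ 2| :=
        intervalIntegral.abs_integral_le_integral_abs hx.1
    _ ≤ ∫ y in (0:ℝ)..x, 2 / σL ^ 2 * |b y - b₀ y| :=
        intervalIntegral.integral_mono_on hx.1 hii_abs hii_rhs_x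
          (fun y hy => hpt y (Set.Icc_subset_Icc le_rfl hx.2 hy))
    _ ≤ ∫ y in (0:ℝ)..1, 2 / σL ^ 2 * |b y - b₀ y| :=
        intervalIntegral.integral_mono_interval le_rfl hx.1 hx.2
          (Filter.Eventually.of_forall (fun y => by positivity)) hii_rhs_1
    _ = 2 / σL ^ 2 * ∫ y in (0:ℝ)..1, |b y - b₀ y| :=
        intervalIntegral.integral_const_mul _ _

end aux

section aux2
variable {σ b b₀ : ℝ → ℝ} {K₀ σL : ℝ}

lemma expIb_bdd (hσL : 0 < σL) (hσl : ∀ x ∈ Set.Icc (0:ℝ) 1, σL ≤ σ x)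
    (hbK : ∀ x ∈ Set.Icc (0:ℝ) 1, |b x| ≤ K₀) :
    ∀ x ∈ Set.Icc (0:ℝ) 1, Real.exp (Ib σ b x) ≤ Real.exp (2 * K₀ / σL ^ 2) :=
  fun x hx => Real.exp_le_exp.mpr (abs_le.mp (Ib_bdd hσL hσl hbK x hx)).2

lemma expNegIb_bdd (hσL : 0 < σL) (hσl : ∀ x ∈ Set.Icc (0:ℝ) 1, σL ≤ σ x)
    (hbK : ∀ x ∈ Set.Icc (0:ℝ) 1, |b x| ≤ K₀) :
    ∀ x ∈ Set.Icc (0:ℝ) 1, Real.exp (-(Ib σ b x)) ≤ Real.exp (2 * K₀ / σL ^ 2) :=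
  fun x hx => Real.exp_le_exp.mpr (by
    have := (abs_le.mp (Ib_bdd hσL hσl hbK x hx)).1; linarith)

lemma J_bdd (hσL : 0 < σL) (hσl : ∀ x ∈ Set.Icc (0:ℝ) 1, σL ≤ σ x)
    (hbK : ∀ x ∈ Set.Icc (0:ℝ) 1, |b x| ≤ K₀) :
    ∀ x ∈ Set.Icc (0:ℝ) 1,
      |∫ y in x..(1:ℝ), Real.exp (-(Ib σ b y))| ≤ Real.exp (2 * K₀ / σL ^ 2) := by
  intro x hx
  have hsub : Set.uIoc x (1:ℝ) ⊆ Set.Icc (0:ℝ) 1 := fun y hy =>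
    ⟨(le_min hx.1 zero_le_one).trans hy.1.le, hy.2.trans (max_le hx.2 le_rfl)⟩
  calc |∫ y in x..(1:ℝ), Real.exp (-(Ib σ b y))|
      ≤ Real.exp (2 * K₀ / σL ^ 2) * |1 - x| := by
        rw [← Real.norm_eq_abs (∫ y in x..(1:ℝ), Real.exp (-(Ib σ b y)))]
        exact intervalIntegral.norm_integral_le_of_norm_le_const (fun y hy => by
          rw [Real.norm_eq_abs, abs_of_pos (Real.exp_pos _)]
          exact expNegIb_bdd hσL hσl hbK y (hsub hy))
    _ ≤ Real.exp (2 * K₀ / σL ^ 2) * 1 := by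
        apply mul_le_mul_of_nonneg_left _ (Real.exp_pos _).le
        rw [abs_of_nonneg (by linarith [hx.2])]; linarith [hx.1]
    _ = Real.exp (2 * K₀ / σL ^ 2) := mul_one _

lemma K_bdd (hσL : 0 < σL) (hσl : ∀ x ∈ Set.Icc (0:ℝ) 1, σL ≤ σ x)
    (hbK : ∀ x ∈ Set.Icc (0:ℝ) 1, |b x| ≤ K₀) :
    ∀ x ∈ Set.Icc (0:ℝ) 1,
      |∫ y in (0:ℝ)..x, Real.exp (-(Ib σ b y))| ≤ Real.exp (2 * K₀ / σL ^ 2) := by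
  intro x hx
  have hsub : Set.uIoc (0:ℝ) x ⊆ Set.Icc (0:ℝ) 1 := fun y hy =>
    ⟨(le_min le_rfl hx.1).trans hy.1.le, hy.2.trans (max_le zero_le_one hx.2)⟩
  calc |∫ y in (0:ℝ)..x, Real.exp (-(Ib σ b y))|
      ≤ Real.exp (2 * K₀ / σL ^ 2) * |x - 0| := by
        rw [← Real.norm_eq_abs (∫ y in (0:ℝ)..x, Real.exp (-(Ib σ b y)))]
        exact intervalIntegral.norm_integral_le_of_norm_le_const (fun y hy => by
          rw [Real.norm_eq_abs, abs_of_pos (Real.exp_pos _)]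
          exact expNegIb_bdd hσL hσl hbK y (hsub hy))
    _ ≤ Real.exp (2 * K₀ / σL ^ 2) * 1 := by
        apply mul_le_mul_of_nonneg_left _ (Real.exp_pos _).le
        rw [sub_zero, abs_of_nonneg hx.1]; exact hx.2
    _ = Real.exp (2 * K₀ / σL ^ 2) := mul_one _

lemma Ib_cont (hσL : 0 < σL) (hσ : Measurable σ)
    (hσl : ∀ x ∈ Set.Icc (0:ℝ) 1, σL ≤ σ x) (hb : Measurable b)
    (hbK : ∀ x ∈ Set.Icc (0:ℝ) 1, |b x| ≤ K₀) :
    ContinuousOn (Ib σ b) (Set.Icc (0:ℝ) 1) := by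
  have hiic : IntervalIntegrable (fun y => 2 * b y / σ y ^ 2) volume 0 1 :=
    ii_of_bdd ((measurable_const.mul hb).div (hσ.pow_const 2))
      (frac_bdd hσL hσl hbK) (by norm_num) (by norm_num)
  have hIOn : IntegrableOn (fun y => 2 * b y / σ y ^ 2) (Set.uIcc (0:ℝ) 1) volume := by
    rw [Set.uIcc_of_le zero_le_one]
    exact (intervalIntegrable_iff_integrableOn_Icc_of_le zero_le_one).mp hiic
  have h := intervalIntegral.continuousOn_primitive_interval hIOn
  rw [Set.uIcc_of_le zero_le_one] at h
  exact h

lemma expNegIb_cont (hσL : 0 < σL) (hσ : Measurable σ)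
    (hσl : ∀ x ∈ Set.Icc (0:ℝ) 1, σL ≤ σ x) (hb : Measurable b)
    (hbK : ∀ x ∈ Set.Icc (0:ℝ) 1, |b x| ≤ K₀) :
    ContinuousOn (fun y => Real.exp (-(Ib σ b y))) (Set.Icc (0:ℝ) 1) :=
  Real.continuous_exp.comp_continuousOn (Ib_cont hσL hσ hσl hb hbK).neg

lemma expNegIb_ii (hσL : 0 < σL) (hσ : Measurable σ)
    (hσl : ∀ x ∈ Set.Icc (0:ℝ) 1, σL ≤ σ x) (hb : Measurable b)
    (hbK : ∀ x ∈ Set.Icc (0:ℝ) 1, |b x| ≤ K₀) {u v : ℝ}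
    (hu : u ∈ Set.Icc (0:ℝ) 1) (hv : v ∈ Set.Icc (0:ℝ) 1) :
    IntervalIntegrable (fun y => Real.exp (-(Ib σ b y))) volume u v := by
  apply ContinuousOn.intervalIntegrable
  apply (expNegIb_cont hσL hσ hσl hb hbK).mono
  intro y hy
  exact ⟨(le_min hu.1 hv.1).trans hy.1, hy.2.trans (max_le hu.2 hv.2)⟩

lemma fb_ii (hσL : 0 < σL) (hσ : Measurable σ)
    (hσl : ∀ x ∈ Set.Icc (0:ℝ) 1, σL ≤ σ x) (hb : Measurable b)
    (hbK : ∀ x ∈ Set.Icc (0:ℝ) 1, |b x| ≤ K₀) :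
    IntervalIntegrable (fun x => (Real.exp (Ib σ b x) / (σ x) ^ 2) *
      (Real.exp (Ib σ b 1) * (∫ y in x..(1:ℝ), Real.exp (-(Ib σ b y))) +
        ∫ y in (0:ℝ)..x, Real.exp (-(Ib σ b y)))) volume 0 1 := by
  set E := Real.exp (2 * K₀ / σL ^ 2) with hE
  have hIbcont := Ib_cont hσL hσ hσl hb hbK
  have hnegcont := expNegIb_cont hσL hσ hσl hb hbK
  have hnegIOn : IntegrableOn (fun y => Real.exp (-(Ib σ b y))) (Set.uIcc (0:ℝ) 1) volume := by
    rw [Set.uIcc_of_le zero_le_one]; exact hnegcont.integrableOn_Icc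
  have hKcont : ContinuousOn (fun x => ∫ y in (0:ℝ)..x, Real.exp (-(Ib σ b y)))
      (Set.Icc (0:ℝ) 1) := by
    have h := intervalIntegral.continuousOn_primitive_interval hnegIOn
    rwa [Set.uIcc_of_le zero_le_one] at h
  have hJcont : ContinuousOn (fun x => ∫ y in x..(1:ℝ), Real.exp (-(Ib σ b y)))
      (Set.Icc (0:ℝ) 1) := by
    have h := intervalIntegral.continuousOn_primitive_interval_left hnegIOn
    rwa [Set.uIcc_of_le zero_le_one] at h
  have hBcont : ContinuousOn (fun x =>
      Real.exp (Ib σ b 1) * (∫ y in x..(1:ℝ), Real.exp (-(Ib σ b y))) +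
        ∫ y in (0:ℝ)..x, Real.exp (-(Ib σ b y))) (Set.Icc (0:ℝ) 1) :=
    ((continuousOn_const.mul hJcont).add hKcont)
  have hAae : AEMeasurable (fun x => Real.exp (Ib σ b x) / (σ x) ^ 2)
      (volume.restrict (Set.Icc (0:ℝ) 1)) := by
    apply AEMeasurable.div
    · exact (Real.continuous_exp.comp_continuousOn hIbcont).aemeasurable measurableSet_Icc
    · exact ((hσ.pow_const 2).aemeasurable)
  have hae : AEMeasurable (fun x => (Real.exp (Ib σ b x) / (σ x) ^ 2) *
      (Real.exp (Ib σ b 1) * (∫ y in x..(1:ℝ), Real.exp (-(Ib σ b y))) +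
        ∫ y in (0:ℝ)..x, Real.exp (-(Ib σ b y))))
      (volume.restrict (Set.Icc (0:ℝ) 1)) :=
    hAae.mul (hBcont.aemeasurable measurableSet_Icc)
  have haeIoc : AEStronglyMeasurable (fun x => (Real.exp (Ib σ b x) / (σ x) ^ 2) *
      (Real.exp (Ib σ b 1) * (∫ y in x..(1:ℝ), Real.exp (-(Ib σ b y))) +
        ∫ y in (0:ℝ)..x, Real.exp (-(Ib σ b y))))
      (volume.restrict (Set.Ioc (0:ℝ) 1)) :=
    (hae.mono_measure (Measure.restrict_mono Set.Ioc_subset_Icc_self le_rfl)).aestronglyMeasurable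
  have hbdd : ∀ x ∈ Set.Icc (0:ℝ) 1, abs ((Real.exp (Ib σ b x) / (σ x) ^ 2) *
      (Real.exp (Ib σ b 1) * (∫ y in x..(1:ℝ), Real.exp (-(Ib σ b y))) +
        ∫ y in (0:ℝ)..x, Real.exp (-(Ib σ b y)))) ≤ E / σL ^ 2 * (E * E + E) := by
    intro x hx
    have hσx : σL ≤ σ x := hσl x hx
    have hσx2 : σL ^ 2 ≤ σ x ^ 2 := by nlinarith
    have hA : abs (Real.exp (Ib σ b x) / (σ x) ^ 2) ≤ E / σL ^ 2 := by
      rw [abs_div, abs_of_pos (Real.exp_pos _), abs_of_nonneg (sq_nonneg _)]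
      exact div_le_div₀ (Real.exp_pos _).le (expIb_bdd hσL hσl hbK x hx) (by positivity) hσx2
    have hB : abs (Real.exp (Ib σ b 1) * (∫ y in x..(1:ℝ), Real.exp (-(Ib σ b y))) +
        ∫ y in (0:ℝ)..x, Real.exp (-(Ib σ b y))) ≤ E * E + E := by
      calc _ ≤ abs (Real.exp (Ib σ b 1) * (∫ y in x..(1:ℝ), Real.exp (-(Ib σ b y)))) +
            abs (∫ y in (0:ℝ)..x, Real.exp (-(Ib σ b y))) := abs_add_le _ _
        _ ≤ E * E + E := by
            rw [abs_mul, abs_of_pos (Real.exp_pos _)]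
            have h1 := expIb_bdd hσL hσl hbK 1 (by norm_num)
            have h2 := J_bdd hσL hσl hbK x hx
            have h3 := K_bdd hσL hσl hbK x hx
            have h4 : (0:ℝ) ≤ Real.exp (Ib σ b 1) := (Real.exp_pos _).le
            nlinarith [abs_nonneg (∫ y in x..(1:ℝ), Real.exp (-(Ib σ b y))),
              Real.exp_pos (2 * K₀ / σL ^ 2)]
    rw [abs_mul]
    have h5 : (0:ℝ) ≤ E / σL ^ 2 := by positivity
    nlinarith [abs_nonneg ((Real.exp (Ib σ b x) / (σ x) ^ 2)),
      abs_nonneg (Real.exp (Ib σ b 1) * (∫ y in x..(1:ℝ), Real.exp (-(Ib σ b y))) +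
        ∫ y in (0:ℝ)..x, Real.exp (-(Ib σ b y)))]
  rw [intervalIntegrable_iff, Set.uIoc_of_le zero_le_one]
  refine Integrable.mono' (g := fun _ => E / σL ^ 2 * (E * E + E)) ?_ haeIoc ?_
  · exact integrableOn_const measure_Ioc_lt_top.ne
  · filter_upwards [ae_restrict_mem measurableSet_Ioc] with x hx
    rw [Real.norm_eq_abs]
    exact hbdd x (Set.Ioc_subset_Icc_self hx)

end aux2

theorem statement8 (K₀ σL σU : ℝ) (hK₀ : 0 < K₀) (hσL : 0 < σL) (hσLU : σL ≤ σU) :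
    ∃ C > (0:ℝ), ∀ σ : ℝ → ℝ, Measurable σ →
      (∀ x ∈ Set.Icc (0:ℝ) 1, σL ≤ σ x) →
      (∀ x ∈ Set.Icc (0:ℝ) 1, σ x ≤ σU) →
      ∀ b b₀ : ℝ → ℝ, Measurable b → Measurable b₀ →
      (∀ x ∈ Set.Icc (0:ℝ) 1, |b x| ≤ K₀) →
      (∀ x ∈ Set.Icc (0:ℝ) 1, |b₀ x| ≤ K₀) →
      |Hb σ b - Hb σ b₀| ≤ C * L2norm (fun y => b y - b₀ y) := by
  have hE0 : 0 < Real.exp (2 * K₀ / σL ^ 2) := Real.exp_pos _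
  refine ⟨2 / σL ^ 2 * (Real.exp (2 * K₀ / σL ^ 2) / σL ^ 2 *
      (3 * Real.exp (2 * K₀ / σL ^ 2) ^ 2 + 2 * Real.exp (2 * K₀ / σL ^ 2))),
    by positivity, ?_⟩
  intro σ hσ hσl hσu b b₀ hb hb₀ hbK hb₀K
  set E := Real.exp (2 * K₀ / σL ^ 2) with hE
  set D := ∫ y in (0:ℝ)..1, |b y - b₀ y| with hD
  have hD0 : 0 ≤ D := intervalIntegral.integral_nonneg zero_le_one (fun u _ => abs_nonneg _)
  set δ := 2 / σL ^ 2 * D with hδ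
  have hδ0 : 0 ≤ δ := by positivity
  have h01 : (0:ℝ) ∈ Set.Icc (0:ℝ) 1 := by norm_num
  have h11 : (1:ℝ) ∈ Set.Icc (0:ℝ) 1 := by norm_num
  have hId : ∀ x ∈ Set.Icc (0:ℝ) 1, |Ib σ b x - Ib σ b₀ x| ≤ δ := by
    intro x hx
    rw [hδ, hD]
    exact Ib_diff hσL hσ hσl hb hb₀ hbK hb₀K x hx
  have hed : ∀ x ∈ Set.Icc (0:ℝ) 1,
      |Real.exp (Ib σ b x) - Real.exp (Ib σ b₀ x)| ≤ E * δ := by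
    intro x hx
    calc |Real.exp (Ib σ b x) - Real.exp (Ib σ b₀ x)|
        ≤ E * |Ib σ b x - Ib σ b₀ x| :=
          exp_lip (Ib_bdd hσL hσl hbK x hx) (Ib_bdd hσL hσl hb₀K x hx)
      _ ≤ E * δ := mul_le_mul_of_nonneg_left (hId x hx) hE0.le
  have hedneg : ∀ x ∈ Set.Icc (0:ℝ) 1,
      |Real.exp (-(Ib σ b x)) - Real.exp (-(Ib σ b₀ x))| ≤ E * δ := by
    intro x hx
    have h1 : |(-(Ib σ b x))| ≤ 2 * K₀ / σL ^ 2 := by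
      rw [abs_neg]; exact Ib_bdd hσL hσl hbK x hx
    have h2 : |(-(Ib σ b₀ x))| ≤ 2 * K₀ / σL ^ 2 := by
      rw [abs_neg]; exact Ib_bdd hσL hσl hb₀K x hx
    calc |Real.exp (-(Ib σ b x)) - Real.exp (-(Ib σ b₀ x))|
        ≤ E * |(-(Ib σ b x)) - (-(Ib σ b₀ x))| := exp_lip h1 h2
      _ = E * |Ib σ b x - Ib σ b₀ x| := by rw [neg_sub_neg, abs_sub_comm]
      _ ≤ E * δ := mul_le_mul_of_nonneg_left (hId x hx) hE0.le
  have hJd : ∀ x ∈ Set.Icc (0:ℝ) 1,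
      |(∫ y in x..(1:ℝ), Real.exp (-(Ib σ b y))) -
        ∫ y in x..(1:ℝ), Real.exp (-(Ib σ b₀ y))| ≤ E * δ := by
    intro x hx
    have hsub : Set.uIoc x (1:ℝ) ⊆ Set.Icc (0:ℝ) 1 := fun y hy =>
      ⟨(le_min hx.1 zero_le_one).trans hy.1.le, hy.2.trans (max_le hx.2 le_rfl)⟩
    rw [← intervalIntegral.integral_sub (expNegIb_ii hσL hσ hσl hb hbK hx h11)
      (expNegIb_ii hσL hσ hσl hb₀ hb₀K hx h11)]
    calc |∫ y in x..(1:ℝ), (Real.exp (-(Ib σ b y)) - Real.exp (-(Ib σ b₀ y)))|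
        ≤ E * δ * |1 - x| := by
          rw [← Real.norm_eq_abs (∫ y in x..(1:ℝ),
            (Real.exp (-(Ib σ b y)) - Real.exp (-(Ib σ b₀ y))))]
          exact intervalIntegral.norm_integral_le_of_norm_le_const (fun y hy => by
            rw [Real.norm_eq_abs]; exact hedneg y (hsub hy))
      _ ≤ E * δ * 1 := by
          apply mul_le_mul_of_nonneg_left _ (by positivity)
          rw [abs_of_nonneg (by linarith [hx.2])]; linarith [hx.1]
      _ = E * δ := mul_one _
  have hKd : ∀ x ∈ Set.Icc (0:ℝ) 1,
      |(∫ y in (0:ℝ)..x, Real.exp (-(Ib σ b y))) -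
        ∫ y in (0:ℝ)..x, Real.exp (-(Ib σ b₀ y))| ≤ E * δ := by
    intro x hx
    have hsub : Set.uIoc (0:ℝ) x ⊆ Set.Icc (0:ℝ) 1 := fun y hy =>
      ⟨(le_min le_rfl hx.1).trans hy.1.le, hy.2.trans (max_le zero_le_one hx.2)⟩
    rw [← intervalIntegral.integral_sub (expNegIb_ii hσL hσ hσl hb hbK h01 hx)
      (expNegIb_ii hσL hσ hσl hb₀ hb₀K h01 hx)]
    calc |∫ y in (0:ℝ)..x, (Real.exp (-(Ib σ b y)) - Real.exp (-(Ib σ b₀ y)))|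
        ≤ E * δ * |x - 0| := by
          rw [← Real.norm_eq_abs (∫ y in (0:ℝ)..x,
            (Real.exp (-(Ib σ b y)) - Real.exp (-(Ib σ b₀ y))))]
          exact intervalIntegral.norm_integral_le_of_norm_le_const (fun y hy => by
            rw [Real.norm_eq_abs]; exact hedneg y (hsub hy))
      _ ≤ E * δ * 1 := by
          apply mul_le_mul_of_nonneg_left _ (by positivity)
          rw [sub_zero, abs_of_nonneg hx.1]; exact hx.2
      _ = E * δ := mul_one _
  -- pointwise bound on the difference of the integrands
  have hptd : ∀ x ∈ Set.Icc (0:ℝ) 1,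
      abs ((Real.exp (Ib σ b x) / (σ x) ^ 2) *
          (Real.exp (Ib σ b 1) * (∫ y in x..(1:ℝ), Real.exp (-(Ib σ b y))) +
            ∫ y in (0:ℝ)..x, Real.exp (-(Ib σ b y))) -
        (Real.exp (Ib σ b₀ x) / (σ x) ^ 2) *
          (Real.exp (Ib σ b₀ 1) * (∫ y in x..(1:ℝ), Real.exp (-(Ib σ b₀ y))) +
            ∫ y in (0:ℝ)..x, Real.exp (-(Ib σ b₀ y)))) ≤
      E / σL ^ 2 * (3 * E ^ 2 + 2 * E) * δ := by
    intro x hx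
    have hσx : σL ≤ σ x := hσl x hx
    have hσx2 : σL ^ 2 ≤ σ x ^ 2 := by nlinarith
    set A := Real.exp (Ib σ b x) / (σ x) ^ 2 with hA_def
    set A₀ := Real.exp (Ib σ b₀ x) / (σ x) ^ 2 with hA0_def
    set J := ∫ y in x..(1:ℝ), Real.exp (-(Ib σ b y)) with hJ_def
    set J₀ := ∫ y in x..(1:ℝ), Real.exp (-(Ib σ b₀ y)) with hJ0_def
    set K := ∫ y in (0:ℝ)..x, Real.exp (-(Ib σ b y)) with hK_def
    set K₀' := ∫ y in (0:ℝ)..x, Real.exp (-(Ib σ b₀ y)) with hK0_def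
    set e1 := Real.exp (Ib σ b 1) with he1_def
    set e1₀ := Real.exp (Ib σ b₀ 1) with he10_def
    have hA : |A| ≤ E / σL ^ 2 := by
      rw [hA_def, abs_div, abs_of_pos (Real.exp_pos _), abs_of_nonneg (sq_nonneg _)]
      exact div_le_div₀ hE0.le (expIb_bdd hσL hσl hbK x hx) (by positivity) hσx2
    have hAd : |A - A₀| ≤ E * δ / σL ^ 2 := by
      rw [hA_def, hA0_def, div_sub_div_same, abs_div, abs_of_nonneg (sq_nonneg (σ x))]
      exact div_le_div₀ (by positivity) (hed x hx) (by positivity) hσx2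
    have hJb : |J| ≤ E := J_bdd hσL hσl hbK x hx
    have hKb0 : |K₀'| ≤ E := K_bdd hσL hσl hb₀K x hx
    have hJb0 : |J₀| ≤ E := J_bdd hσL hσl hb₀K x hx
    have he1b : |e1| ≤ E := by
      rw [he1_def, abs_of_pos (Real.exp_pos _)]; exact expIb_bdd hσL hσl hbK 1 h11
    have he1b0 : |e1₀| ≤ E := by
      rw [he10_def, abs_of_pos (Real.exp_pos _)]; exact expIb_bdd hσL hσl hb₀K 1 h11
    have he1d : |e1 - e1₀| ≤ E * δ := hed 1 h11
    have hJdx : |J - J₀| ≤ E * δ := hJd x hx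
    have hKdx : |K - K₀'| ≤ E * δ := hKd x hx
    have hB0 : |e1₀ * J₀ + K₀'| ≤ E * E + E := by
      calc |e1₀ * J₀ + K₀'| ≤ |e1₀ * J₀| + |K₀'| := abs_add_le _ _
        _ ≤ E * E + E := by
            rw [abs_mul]
            have := mul_le_mul he1b0 hJb0 (abs_nonneg _) hE0.le
            linarith
    have hBd : |(e1 * J + K) - (e1₀ * J₀ + K₀')| ≤ E * δ * E + E * (E * δ) + E * δ := by
      have hid : (e1 * J + K) - (e1₀ * J₀ + K₀') =
          (e1 - e1₀) * J + e1₀ * (J - J₀) + (K - K₀') := by ring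
      rw [hid]
      calc |(e1 - e1₀) * J + e1₀ * (J - J₀) + (K - K₀')|
          ≤ |(e1 - e1₀) * J + e1₀ * (J - J₀)| + |K - K₀'| := abs_add_le _ _
        _ ≤ |(e1 - e1₀) * J| + |e1₀ * (J - J₀)| + |K - K₀'| := by
            linarith [abs_add_le ((e1 - e1₀) * J) (e1₀ * (J - J₀))]
        _ ≤ E * δ * E + E * (E * δ) + E * δ := by
            rw [abs_mul, abs_mul]
            have t1 := mul_le_mul he1d hJb (abs_nonneg _) (by positivity)
            have t2 := mul_le_mul he1b0 hJdx (abs_nonneg _) hE0.le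
            linarith
    have hid2 : A * (e1 * J + K) - A₀ * (e1₀ * J₀ + K₀') =
        A * ((e1 * J + K) - (e1₀ * J₀ + K₀')) + (A - A₀) * (e1₀ * J₀ + K₀') := by ring
    calc abs (A * (e1 * J + K) - A₀ * (e1₀ * J₀ + K₀'))
        = abs (A * ((e1 * J + K) - (e1₀ * J₀ + K₀')) +
            (A - A₀) * (e1₀ * J₀ + K₀')) := by rw [hid2]
      _ ≤ abs (A * ((e1 * J + K) - (e1₀ * J₀ + K₀'))) +
            abs ((A - A₀) * (e1₀ * J₀ + K₀')) := abs_add_le _ _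
      _ ≤ E / σL ^ 2 * (E * δ * E + E * (E * δ) + E * δ) +
            E * δ / σL ^ 2 * (E * E + E) := by
          rw [abs_mul, abs_mul]
          have t1 := mul_le_mul hA hBd (abs_nonneg _) (by positivity)
          have t2 := mul_le_mul hAd hB0 (abs_nonneg _) (by positivity)
          linarith
      _ = E / σL ^ 2 * (3 * E ^ 2 + 2 * E) * δ := by ring
  -- assemble
  have hfb := fb_ii hσL hσ hσl hb hbK
  have hfb₀ := fb_ii hσL hσ hσl hb₀ hb₀K
  have hsub01 : Set.uIoc (0:ℝ) 1 ⊆ Set.Icc (0:ℝ) 1 := by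
    rw [Set.uIoc_of_le zero_le_one]; exact Set.Ioc_subset_Icc_self
  have hHd : |Hb σ b - Hb σ b₀| ≤ E / σL ^ 2 * (3 * E ^ 2 + 2 * E) * δ * |1 - 0| := by
    rw [Hb, Hb, ← intervalIntegral.integral_sub hfb hfb₀, ← Real.norm_eq_abs]
    exact intervalIntegral.norm_integral_le_of_norm_le_const (fun x hx => by
      rw [Real.norm_eq_abs]; exact hptd x (hsub01 hx))
  have hl2 : D ≤ L2norm (fun y => b y - b₀ y) := by
    rw [L2norm, hD]
    exact l1_le_l2 (C := 2 * K₀) (hb.sub hb₀) (fun y hy => by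
      calc |b y - b₀ y| ≤ |b y| + |b₀ y| := abs_sub _ _
        _ ≤ 2 * K₀ := by linarith [hbK y hy, hb₀K y hy])
  have hQ0 : 0 ≤ E / σL ^ 2 * (3 * E ^ 2 + 2 * E) := by positivity
  calc |Hb σ b - Hb σ b₀|
      ≤ E / σL ^ 2 * (3 * E ^ 2 + 2 * E) * δ * |1 - 0| := hHd
    _ = 2 / σL ^ 2 * (E / σL ^ 2 * (3 * E ^ 2 + 2 * E)) * D := by
        rw [hδ]; norm_num; ring
    _ ≤ 2 / σL ^ 2 * (E / σL ^ 2 * (3 * E ^ 2 + 2 * E)) *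
        L2norm (fun y => b y - b₀ y) := by
        apply mul_le_mul_of_nonneg_left hl2 (by positivity)
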